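/- arXiv:1911.10661 — 3 statements merged into one kernel-verified Lean document; each statement's English description precedes it below -/
import Mathlib

section
/- If e : [0,T) → ℝ is differentiable, satisfies e'(t) ≤ −e(t)² + g(t)e(t) for a nonnegative function g, and e(0) < 0, then e cannot be defined (remain finite) on all of [0,∞); more precisely any solution with e(0) = −a < 0 satisfies e(t) ≤ −a/(1 − a t), hence blows up to −∞ by time 1/a. -/
open Set Real

-- auxiliary: derivative of u t = -a/(1-a*t) on {t | 1 - a*t ≠ 0}
lemma hasDerivAt_u (a t : ℝ) (h : 1 - a * t ≠ 0) :
    HasDerivAt (fun s => -a / (1 - a * s)) (-(-a / (1 - a * t)) ^ 2) t := by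
  have h1 : HasDerivAt (fun s : ℝ => 1 - a * s) (-a) t := by
    simpa using ((hasDerivAt_id t).const_mul a).const_sub 1
  have h2 := (h1.inv h)
  have h3 := h2.const_mul (-a)
  exact h3.congr_deriv (by rw [div_pow]; ring)

/-- Finite-time blow-up in the supercritical region: if `e' ≤ -e² + g e` with
`g ≥ 0` and `e 0 = -a < 0`, then `e t ≤ -a / (1 - a t)` for `0 ≤ t < 1/a`,
so `e` blows up to `-∞` by time `1/a`. -/
theorem stmt_1 (a : ℝ) (ha : 0 < a) (e e' g : ℝ → ℝ)
    (hderiv : ∀ t ∈ Set.Ico (0 : ℝ) (1 / a), HasDerivAt e (e' t) t)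
    (hineq : ∀ t ∈ Set.Ico (0 : ℝ) (1 / a), e' t ≤ -(e t) ^ 2 + g t * e t)
    (hg : ∀ t ∈ Set.Ico (0 : ℝ) (1 / a), 0 ≤ g t)
    (h0 : e 0 = -a) :
    ∀ t ∈ Set.Ico (0 : ℝ) (1 / a), e t ≤ -a / (1 - a * t) := by
  intro t₀ ht₀
  obtain ⟨ht₀0, ht₀1⟩ := ht₀
  have hat₀ : a * t₀ < 1 := by
    rw [lt_div_iff₀ ha] at ht₀1; linarith
  -- basic positivity on [0, t₀]
  have hpos : ∀ t ∈ Icc (0:ℝ) t₀, 0 < 1 - a * t := fun t ht => by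
    have := mul_le_mul_of_nonneg_left ht.2 ha.le
    linarith
  set u : ℝ → ℝ := fun s => -a / (1 - a * s) with hu
  have hu_le : ∀ t ∈ Icc (0:ℝ) t₀, u t ≤ -a := fun t ht => by
    have h1 := hpos t ht
    rw [hu]; dsimp only
    rw [div_le_iff₀ h1]
    nlinarith [mul_nonneg ha.le ht.1, mul_nonneg (mul_nonneg ha.le ha.le) ht.1]
  -- C bound: -u t ≤ C where C = a/(1-a*t₀)
  set C : ℝ := a / (1 - a * t₀) with hC
  have hC_pos : 0 < C := div_pos ha (by linarith)
  have hu_ge : ∀ t ∈ Icc (0:ℝ) t₀, -C ≤ u t := fun t ht => by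
    have h1 := hpos t ht
    have h2 : 1 - a * t₀ ≤ 1 - a * t := by nlinarith [ht.2]
    rw [hu]; dsimp only
    rw [hC, neg_div, neg_le_neg_iff]
    exact div_le_div_of_nonneg_left ha.le (by linarith) h2
  set K : ℝ := 2 * C + 1 with hK
  -- subset lemma
  have hsub : Icc (0:ℝ) t₀ ⊆ Ico 0 (1/a) := fun t ht => ⟨ht.1, lt_of_le_of_lt ht.2 ht₀1⟩
  -- main perturbed estimate
  have key : ∀ ε : ℝ, 0 < ε → ε * Real.exp (K * t₀) < a →
      e t₀ ≤ u t₀ + ε * Real.exp (K * t₀) := by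
    intro ε hε hεa
    set B : ℝ → ℝ := fun s => u s + ε * Real.exp (K * s) with hB
    set B' : ℝ → ℝ := fun s => -(u s) ^ 2 + ε * K * Real.exp (K * s) with hB'
    have hBderiv : ∀ x ∈ Ico (0:ℝ) t₀, HasDerivWithinAt B (B' x) (Ici x) x := by
      intro x hx
      have h1 : HasDerivAt u (-(u x) ^ 2) x :=
        hasDerivAt_u a x (hpos x ⟨hx.1, hx.2.le⟩).ne'
      have h2 : HasDerivAt (fun s => ε * Real.exp (K * s)) (ε * K * Real.exp (K * x)) x := by
        have := (Real.hasDerivAt_exp (K * x)).comp x (by simpa using (hasDerivAt_id x).const_mul K)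
        have h3 := this.const_mul ε
        exact h3.congr_deriv (by ring)
      exact ((h1.add h2).hasDerivWithinAt)
    have hBneg : ∀ x ∈ Icc (0:ℝ) t₀, B x < 0 := by
      intro x hx
      have h1 : Real.exp (K * x) ≤ Real.exp (K * t₀) := by
        apply Real.exp_le_exp.2
        have hK0 : 0 ≤ K := by positivity
        nlinarith [hx.2]
      have h2 := hu_le x hx
      have : ε * Real.exp (K * x) ≤ ε * Real.exp (K * t₀) :=
        mul_le_mul_of_nonneg_left h1 hε.le
      simp only [hB]
      nlinarith
    have main : ∀ x ∈ Icc (0:ℝ) t₀, e x ≤ B x := by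
      apply image_le_of_deriv_right_lt_deriv_boundary'
        (f' := e')
      · exact fun x hx => ((hderiv x (hsub hx)).continuousAt).continuousWithinAt
      · exact fun x hx => (hderiv x (hsub ⟨hx.1, hx.2.le⟩)).hasDerivWithinAt
      · -- e 0 ≤ B 0
        have hB0 : B 0 = -a + ε := by simp [hB, hu]
        rw [h0, hB0]; linarith
      · -- ContinuousOn B (Icc 0 t₀)
        apply ContinuousOn.add
        · simp only [hu]
          exact ContinuousOn.div continuousOn_const
            (by fun_prop) (fun x hx => (hpos x hx).ne')
        · fun_prop
      · exact hBderiv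
      · -- strict bound at equality points
        intro x hx heq
        have hxI : x ∈ Ico (0:ℝ) (1/a) := hsub ⟨hx.1, hx.2.le⟩
        have h1 := hineq x hxI
        have h2 := hg x hxI
        have hBx : B x < 0 := hBneg x ⟨hx.1, hx.2.le⟩
        have h3 : g x * e x ≤ 0 := by rw [heq]; exact mul_nonpos_of_nonneg_of_nonpos h2 hBx.le
        have h4 : e' x ≤ -(B x)^2 := by rw [← heq]; linarith
        -- B x = u x + εE, so -(B x)^2 = -(u x)^2 - 2εE u x - ε²E²
        have hE : 0 < Real.exp (K * x) := Real.exp_pos _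
        have h5 : -(u x) ≤ C := by linarith [hu_ge x ⟨hx.1, hx.2.le⟩]
        calc e' x ≤ -(B x)^2 := h4
          _ < B' x := by
              simp only [hB, hB']
              have hEK : Real.exp (K * x) * (-2 * u x - ε * Real.exp (K * x)) <
                  Real.exp (K * x) * K := by
                apply mul_lt_mul_of_pos_left _ hE
                have : -2 * u x ≤ 2 * C := by linarith
                nlinarith
              nlinarith
    have := main t₀ ⟨ht₀0, le_rfl⟩
    simpa [hB] using this
  -- take ε → 0
  have final : e t₀ ≤ u t₀ := by
    by_contra hc
    push_neg at hc
    set δ := e t₀ - u t₀ with hδ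
    have hδpos : 0 < δ := by linarith
    have hEpos : 0 < Real.exp (K * t₀) := Real.exp_pos _
    set ε := min (δ / (2 * Real.exp (K * t₀))) (a / (2 * Real.exp (K * t₀))) with hε
    have hεpos : 0 < ε := lt_min (by positivity) (by positivity)
    have h1 : ε * Real.exp (K * t₀) < a := by
      calc ε * Real.exp (K * t₀) ≤ (a / (2 * Real.exp (K * t₀))) * Real.exp (K * t₀) :=
            mul_le_mul_of_nonneg_right (min_le_right _ _) hEpos.le
        _ = a / 2 := by field_simp
        _ < a := by linarith
    have h2 := key ε hεpos h1
    have h3 : ε * Real.exp (K * t₀) ≤ δ / 2 := by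
      calc ε * Real.exp (K * t₀) ≤ (δ / (2 * Real.exp (K * t₀))) * Real.exp (K * t₀) :=
            mul_le_mul_of_nonneg_right (min_le_left _ _) hEpos.le
        _ = δ / 2 := by field_simp
    linarith
  exact final
end

section
/- Suppose e : [0,∞) → ℝ is differentiable, satisfies e'(t) ≥ e(t)(c − e(t)) with c > 0, and 0 < a ≤ e(0) ≤ b. Then there exists t* ≥ 0 such that e(t) ≥ c/2 for all t ≥ t*. -/
open Set

/-- Monotonicity helper: if the derivative bound gives `e' ≥ 0` on `(p,q)`
(because `0 < e ≤ c` there), then `e p ≤ e q`. -/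
private lemma mono_helper (c : ℝ) (e e' : ℝ → ℝ)
    (hderiv : ∀ t : ℝ, 0 ≤ t → HasDerivAt e (e' t) t)
    (hineq : ∀ t : ℝ, 0 ≤ t → e t * (c - e t) ≤ e' t)
    (p q : ℝ) (hp : 0 ≤ p) (hpq : p ≤ q)
    (hpos : ∀ t ∈ Ioo p q, 0 ≤ e t) (hup : ∀ t ∈ Ioo p q, e t ≤ c) :
    e p ≤ e q := by
  have hmem : ∀ t ∈ Icc p q, 0 ≤ t := fun t ht => hp.trans ht.1
  have hcont : ContinuousOn e (Icc p q) := fun t ht =>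
    ((hderiv t (hmem t ht)).continuousAt).continuousWithinAt
  have hdiff : DifferentiableOn ℝ e (interior (Icc p q)) := by
    rw [interior_Icc]
    exact fun t ht => ((hderiv t (hp.trans ht.1.le)).differentiableAt).differentiableWithinAt
  have hmono : MonotoneOn e (Icc p q) := by
    apply monotoneOn_of_deriv_nonneg (convex_Icc p q) hcont hdiff
    rw [interior_Icc]
    intro t ht
    have ht0 : 0 ≤ t := hp.trans ht.1.le
    rw [(hderiv t ht0).deriv]
    refine le_trans ?_ (hineq t ht0)
    exact mul_nonneg (hpos t ht) (sub_nonneg.2 (hup t ht))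
  exact hmono (left_mem_Icc.2 hpq) (right_mem_Icc.2 hpq) hpq

/-- Invariance: if `0 < μ ≤ c/2` and `e s ≥ μ` at some `s ≥ 0`, then `e t ≥ μ`
for all `t ≥ s`. -/
private lemma invariance (c : ℝ) (e e' : ℝ → ℝ)
    (hderiv : ∀ t : ℝ, 0 ≤ t → HasDerivAt e (e' t) t)
    (hineq : ∀ t : ℝ, 0 ≤ t → e t * (c - e t) ≤ e' t)
    (μ : ℝ) (hμ : 0 < μ) (hμc : μ ≤ c / 2)
    (s : ℝ) (hs : 0 ≤ s) (hes : μ ≤ e s) :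
    ∀ t : ℝ, s ≤ t → μ ≤ e t := by
  have hc : 0 < c := lt_of_lt_of_le hμ (hμc.trans (by linarith))
  intro t₁ ht₁
  by_contra h
  push_neg at h
  -- t₀ : last time in [s, t₁] where e ≥ μ
  have hst₁ : s ≤ t₁ := ht₁
  have hcont : ContinuousOn e (Icc s t₁) := fun t ht =>
    ((hderiv t (hs.trans ht.1)).continuousAt).continuousWithinAt
  set S : Set ℝ := Icc s t₁ ∩ e ⁻¹' (Ici μ) with hS
  have hSne : S.Nonempty := ⟨s, ⟨left_mem_Icc.2 hst₁, hes⟩⟩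
  have hSbdd : BddAbove S := ⟨t₁, fun x hx => hx.1.2⟩
  have hSclosed : IsClosed S :=
    hcont.preimage_isClosed_of_isClosed isClosed_Icc isClosed_Ici
  set t₀ := sSup S with ht₀def
  have ht₀S : t₀ ∈ S := hSclosed.csSup_mem hSne hSbdd
  have ht₀0 : 0 ≤ t₀ := hs.trans ht₀S.1.1
  have het₀ : μ ≤ e t₀ := ht₀S.2
  have ht₀t₁ : t₀ < t₁ := lt_of_le_of_ne ht₀S.1.2 fun heq => absurd het₀ (by rw [heq]; exact not_le.2 h)
  have hnotS : ∀ t ∈ Ioc t₀ t₁, e t < μ := by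
    intro t ht
    by_contra hge
    push_neg at hge
    have : t ∈ S := ⟨⟨ht₀S.1.1.trans ht.1.le, ht.2⟩, hge⟩
    exact absurd (le_csSup hSbdd this) (not_le.2 ht.1)
  -- e is positive on (t₀, t₁]
  have hpos : ∀ t ∈ Ioc t₀ t₁, 0 < e t := by
    intro t₃ ht₃
    by_contra hneg
    push_neg at hneg
    set Z : Set ℝ := Icc t₀ t₃ ∩ e ⁻¹' (Iic 0) with hZ
    have hcont' : ContinuousOn e (Icc t₀ t₃) := fun t ht =>
      ((hderiv t (ht₀0.trans ht.1)).continuousAt).continuousWithinAt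
    have hZne : Z.Nonempty := ⟨t₃, ⟨right_mem_Icc.2 ht₃.1.le, hneg⟩⟩
    have hZbdd : BddBelow Z := ⟨t₀, fun x hx => hx.1.1⟩
    have hZclosed : IsClosed Z :=
      hcont'.preimage_isClosed_of_isClosed isClosed_Icc isClosed_Iic
    set t₄ := sInf Z with ht₄def
    have ht₄Z : t₄ ∈ Z := hZclosed.csInf_mem hZne hZbdd
    have het₄ : e t₄ ≤ 0 := ht₄Z.2
    have ht₀t₄ : t₀ < t₄ := by
      rcases lt_or_eq_of_le ht₄Z.1.1 with h' | h'
      · exact h'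
      · exfalso; rw [← h'] at het₄; linarith
    have hnotZ : ∀ t ∈ Ico t₀ t₄, 0 < e t := by
      intro t ht
      by_contra hle
      push_neg at hle
      have : t ∈ Z := ⟨⟨ht.1, ht.2.le.trans ht₄Z.1.2⟩, hle⟩
      exact absurd (csInf_le hZbdd this) (not_le.2 ht.2)
    have : e t₀ ≤ e t₄ := by
      apply mono_helper c e e' hderiv hineq t₀ t₄ ht₀0 ht₀t₄.le
      · exact fun t ht => (hnotZ t ⟨ht.1.le, ht.2⟩).le
      · intro t ht
        have : e t < μ := hnotS t ⟨ht.1, ht.2.le.trans (ht₄Z.1.2.trans ht₃.2)⟩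
        linarith
    linarith
  -- now e ∈ (0, μ) on (t₀, t₁), so e is monotone on [t₀, t₁]
  have : e t₀ ≤ e t₁ := by
    apply mono_helper c e e' hderiv hineq t₀ t₁ ht₀0 ht₀t₁.le
    · exact fun t ht => (hpos t ⟨ht.1, ht.2.le⟩).le
    · intro t ht
      have := hnotS t ⟨ht.1, ht.2.le⟩
      linarith
  linarith

/-- Quantitative lower bound for the logistic differential inequality:
if `e' ≥ e (c - e)` with `c > 0` and `0 < a ≤ e 0 ≤ b`, then eventually
`e t ≥ c / 2`. -/
theorem stmt_2 (c a b : ℝ) (hc : 0 < c) (e e' : ℝ → ℝ)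
    (hderiv : ∀ t : ℝ, 0 ≤ t → HasDerivAt e (e' t) t)
    (hineq : ∀ t : ℝ, 0 ≤ t → e t * (c - e t) ≤ e' t)
    (ha : 0 < a) (h0a : a ≤ e 0) (h0b : e 0 ≤ b) :
    ∃ tstar : ℝ, 0 ≤ tstar ∧ ∀ t : ℝ, tstar ≤ t → c / 2 ≤ e t := by
  set m : ℝ := min a (c / 2) with hm
  have hm0 : 0 < m := lt_min ha (by linarith)
  have hmc : m ≤ c / 2 := min_le_right _ _
  have hma : m ≤ a := min_le_left _ _
  have hlow : ∀ t : ℝ, 0 ≤ t → m ≤ e t :=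
    invariance c e e' hderiv hineq m hm0 hmc 0 le_rfl (hma.trans h0a)
  set δ : ℝ := m * (c / 2) with hδ
  have hδ0 : 0 < δ := mul_pos hm0 (by linarith)
  set T : ℝ := c / (2 * δ) with hT
  have hT0 : 0 < T := div_pos hc (by positivity)
  have hδT : δ * T = c / 2 := by
    field_simp [hT]
    rw [hT, mul_div_assoc', div_mul_eq_mul_div, div_eq_iff (mul_pos two_pos hδ0).ne']
    ring
  -- there is s ∈ [0, T] with e s ≥ c/2
  have hex : ∃ s ∈ Icc (0 : ℝ) T, c / 2 ≤ e s := by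
    by_contra hno
    push_neg at hno
    -- on [0, T], m ≤ e < c/2, so e' ≥ δ
    have hgrow : ∀ t ∈ Ioo (0 : ℝ) T, δ ≤ e' t := by
      intro t ht
      have h1 : m ≤ e t := hlow t ht.1.le
      have h2 : e t < c / 2 := hno t ⟨ht.1.le, ht.2.le⟩
      have h3 : c / 2 ≤ c - e t := by linarith
      calc δ = m * (c / 2) := rfl
        _ ≤ e t * (c - e t) := by
            apply mul_le_mul h1 h3 (by linarith) (by linarith)
        _ ≤ e' t := hineq t ht.1.le
    -- g t = e t - δ t is monotone on [0, T]
    have hg : MonotoneOn (fun t => e t - δ * t) (Icc (0 : ℝ) T) := by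
      apply monotoneOn_of_deriv_nonneg (convex_Icc 0 T)
      · exact fun t ht =>
          (((hderiv t ht.1).sub ((hasDerivAt_id t).const_mul δ)).continuousAt).continuousWithinAt
      · rw [interior_Icc]
        exact fun t ht =>
          (((hderiv t ht.1.le).sub ((hasDerivAt_id t).const_mul δ)).differentiableAt).differentiableWithinAt
      · rw [interior_Icc]
        intro t ht
        have hd : HasDerivAt (fun t => e t - δ * t) (e' t - δ * 1) t :=
          (hderiv t ht.1.le).sub ((hasDerivAt_id t).const_mul δ)
        rw [hd.deriv]
        have := hgrow t ht
        linarith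
    have := hg (left_mem_Icc.2 hT0.le) (right_mem_Icc.2 hT0.le) hT0.le
    simp only [mul_zero, sub_zero] at this
    have heT : c / 2 + a ≤ e T := by
      have : e 0 ≤ e T - δ * T := by linarith
      rw [hδT] at this
      linarith
    have := hno T (right_mem_Icc.2 hT0.le)
    linarith
  obtain ⟨s, hsIcc, hsge⟩ := hex
  refine ⟨T, hT0.le, fun t htT => ?_⟩
  have := invariance c e e' hderiv hineq (c / 2) (by linarith) le_rfl s hsIcc.1 hsge
  exact this t (hsIcc.2.trans htT)
end

section
/- Suppose X, Y : [0,∞) → ℝ are nonnegative differentiable functions satisfying X' ≤ −c₁√ε X + (c₂/√ε) Y + c₃ and Y' ≤ c₄ ε^{3/2} X − c₅ Y + c₆ ε², with all cᵢ > 0, X(0) ≤ C₀, Y(0) ≤ C₀ε². Then for ε sufficiently small there exist constants c₇, c₈ (independent of ε) with X(t) ≤ c₇ ε^{−1/2} and Y(t) ≤ c₈ ε for all t ≥ 0. -/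
open Real Filter Set Topology

/-- If `f` has a negative derivative at `τ`, then `f t < f τ` for `t` slightly
to the right of `τ`. -/
lemma eventually_lt_of_hasDerivAt_neg {f : ℝ → ℝ} {d τ : ℝ}
    (hf : HasDerivAt f d τ) (hd : d < 0) :
    ∀ᶠ t in 𝓝[>] τ, f t < f τ := by
  have h := hasDerivAt_iff_tendsto_slope.mp hf
  have h2 : ∀ᶠ t in 𝓝[≠] τ, slope f τ t < 0 := h (Iio_mem_nhds hd)
  have h3 : 𝓝[>] τ ≤ 𝓝[≠] τ := nhdsWithin_mono _ (fun x hx => ne_of_gt hx)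
  filter_upwards [h3 h2, self_mem_nhdsWithin] with t ht hτt
  have hpos : 0 < t - τ := sub_pos.mpr hτt
  have hslope : (t - τ)⁻¹ * (f t - f τ) < 0 := by
    simpa [slope, vsub_eq_sub, smul_eq_mul] using ht
  nlinarith [mul_pos hpos (inv_pos.mpr hpos)]

/-- Uniform-in-time bounds for the coupled system of differential inequalities
`X' ≤ -c₁√ε X + (c₂/√ε) Y + c₃`, `Y' ≤ c₄ ε^{3/2} X - c₅ Y + c₆ ε²`,
with `X(0) ≤ C₀`, `Y(0) ≤ C₀ ε²`: for `ε` small enough,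
`X(t) ≤ c₇ ε^{-1/2}` and `Y(t) ≤ c₈ ε` for all `t ≥ 0`, with `c₇, c₈`
independent of `ε`. -/
theorem stmt_9 (c₁ c₂ c₃ c₄ c₅ c₆ C₀ : ℝ)
    (h₁ : 0 < c₁) (h₂ : 0 < c₂) (h₃ : 0 < c₃) (h₄ : 0 < c₄) (h₅ : 0 < c₅)
    (h₆ : 0 < c₆) (hC₀ : 0 < C₀) :
    ∃ c₇ c₈ ε₀ : ℝ, 0 < c₇ ∧ 0 < c₈ ∧ 0 < ε₀ ∧
      ∀ ε : ℝ, 0 < ε → ε < ε₀ →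
        ∀ X Y X' Y' : ℝ → ℝ,
          (∀ t : ℝ, 0 ≤ t → 0 ≤ X t) → (∀ t : ℝ, 0 ≤ t → 0 ≤ Y t) →
          (∀ t : ℝ, 0 ≤ t → HasDerivAt X (X' t) t) →
          (∀ t : ℝ, 0 ≤ t → HasDerivAt Y (Y' t) t) →
          (∀ t : ℝ, 0 ≤ t →
            X' t ≤ -c₁ * Real.sqrt ε * X t + c₂ / Real.sqrt ε * Y t + c₃) →
          (∀ t : ℝ, 0 ≤ t →
            Y' t ≤ c₄ * ε * Real.sqrt ε * X t - c₅ * Y t + c₆ * ε ^ 2) →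
          X 0 ≤ C₀ → Y 0 ≤ C₀ * ε ^ 2 →
          ∀ t : ℝ, 0 ≤ t → X t ≤ c₇ / Real.sqrt ε ∧ Y t ≤ c₈ * ε := by
  obtain ⟨A, hA⟩ : ∃ A : ℝ, A = (c₃ + 1) / c₁ + C₀ := ⟨_, rfl⟩
  obtain ⟨B, hB⟩ : ∃ B : ℝ, B = (c₄ * A + c₆ + 1) / c₅ + C₀ := ⟨_, rfl⟩
  have hApos : 0 < A := by rw [hA]; positivity
  have hBpos : 0 < B := by
    have h1 : 0 < c₄ * A := mul_pos h₄ hApos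
    have h2 : 0 < (c₄ * A + c₆ + 1) / c₅ := div_pos (by linarith) h₅
    linarith [hB]
  refine ⟨A, B, min 1 ((1 / (c₂ * B)) ^ 2), hApos, hBpos, by positivity, ?_⟩
  intro ε hε hεlt X Y X' Y' hXnn hYnn hXd hYd hXineq hYineq hX0 hY0
  have hε1 : ε < 1 := lt_of_lt_of_le hεlt (min_le_left _ _)
  have hε2 : ε < (1 / (c₂ * B)) ^ 2 := lt_of_lt_of_le hεlt (min_le_right _ _)
  have hs : 0 < Real.sqrt ε := Real.sqrt_pos.mpr hε
  have hs1 : Real.sqrt ε < 1 := by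
    rw [show (1 : ℝ) = Real.sqrt 1 by simp]
    exact Real.sqrt_lt_sqrt hε.le hε1
  have hsq : Real.sqrt ε * Real.sqrt ε = ε := Real.mul_self_sqrt hε.le
  have hcB : c₂ * B * Real.sqrt ε < 1 := by
    have h' : Real.sqrt ε < 1 / (c₂ * B) := by
      have := Real.sqrt_lt_sqrt hε.le hε2
      rwa [Real.sqrt_sq (by positivity)] at this
    calc c₂ * B * Real.sqrt ε < c₂ * B * (1 / (c₂ * B)) :=
          mul_lt_mul_of_pos_left h' (by positivity)
      _ = 1 := by field_simp
  -- basic consequences for the boundary computations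
  have hAle : A ≤ A / Real.sqrt ε := by
    rw [le_div_iff₀ hs]; nlinarith
  have hC₀A : C₀ ≤ A := by
    have h' : 0 ≤ (c₃ + 1) / c₁ := by positivity
    linarith [hA]
  have hC₀B : C₀ ≤ B := by
    have h' : 0 ≤ (c₄ * A + c₆ + 1) / c₅ := by
      have : 0 < c₄ * A := by positivity
      positivity
    linarith [hB]
  have hc₁A : c₁ * A = c₃ + 1 + c₁ * C₀ := by rw [hA]; field_simp
  have hc₅B : c₅ * B = c₄ * A + c₆ + 1 + c₅ * C₀ := by rw [hB]; field_simp
  -- the invariant region claim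
  have main : ∀ t : ℝ, 0 ≤ t → X t ≤ A / Real.sqrt ε ∧ Y t ≤ B * ε := by
    let S : Set ℝ := {t : ℝ | 0 ≤ t ∧ ¬(X t ≤ A / Real.sqrt ε ∧ Y t ≤ B * ε)}
    have hgood : S = ∅ := by
      by_contra hne
      have hne' : S.Nonempty := nonempty_iff_ne_empty.mpr hne
      have hbdd : BddBelow S := ⟨0, fun x hx => hx.1⟩
      let τ := sInf S
      have hτ0 : 0 ≤ τ := le_csInf hne' (fun x hx => hx.1)
      have hbefore : ∀ s, 0 ≤ s → s < τ →
          X s ≤ A / Real.sqrt ε ∧ Y s ≤ B * ε := by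
        intro s hs0 hsτ
        by_contra hcon
        exact absurd (csInf_le hbdd ⟨hs0, hcon⟩) (not_le.mpr hsτ)
      have hXc : ContinuousAt X τ := (hXd τ hτ0).continuousAt
      have hYc : ContinuousAt Y τ := (hYd τ hτ0).continuousAt
      -- the bounds hold at τ itself
      have hXτ : X τ ≤ A / Real.sqrt ε := by
        rcases eq_or_lt_of_le hτ0 with h0 | h0
        · rw [← h0]; calc X 0 ≤ C₀ := hX0
            _ ≤ A := hC₀A
            _ ≤ A / Real.sqrt ε := hAle
        · refine le_of_tendsto (hXc.continuousWithinAt :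
            Filter.Tendsto X (𝓝[<] τ) (𝓝 (X τ))) ?_
          filter_upwards [Ioo_mem_nhdsLT_of_mem (show τ ∈ Ioc 0 τ from ⟨h0, le_rfl⟩)]
            with s hsmem
          exact (hbefore s hsmem.1.le hsmem.2).1
      have hYτ : Y τ ≤ B * ε := by
        rcases eq_or_lt_of_le hτ0 with h0 | h0
        · rw [← h0]; calc Y 0 ≤ C₀ * ε ^ 2 := hY0
            _ ≤ B * ε := by
              nlinarith [mul_nonneg (sub_nonneg.mpr hC₀B) hε.le,
                mul_nonneg (mul_nonneg hC₀.le hε.le) (sub_nonneg.mpr hε1.le)]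
        · refine le_of_tendsto (hYc.continuousWithinAt :
            Filter.Tendsto Y (𝓝[<] τ) (𝓝 (Y τ))) ?_
          filter_upwards [Ioo_mem_nhdsLT_of_mem (show τ ∈ Ioc 0 τ from ⟨h0, le_rfl⟩)]
            with s hsmem
          exact (hbefore s hsmem.1.le hsmem.2).2
      -- right of τ, the X bound keeps holding
      have hXev : ∀ᶠ t in 𝓝[>] τ, X t ≤ A / Real.sqrt ε := by
        rcases eq_or_lt_of_le hXτ with heq | hlt
        · -- boundary case: derivative is negative
          have hd : X' τ < 0 := by
            have h1 := hXineq τ hτ0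
            have h2 : c₂ / Real.sqrt ε * Y τ ≤ c₂ * B * Real.sqrt ε := by
              rw [div_mul_eq_mul_div, div_le_iff₀ hs]
              calc c₂ * Y τ ≤ c₂ * (B * ε) :=
                    mul_le_mul_of_nonneg_left hYτ h₂.le
                _ = c₂ * B * Real.sqrt ε * Real.sqrt ε := by linear_combination c₂ * B * hsq.symm
            have hcancel : Real.sqrt ε * (A / Real.sqrt ε) = A := by
              rw [mul_comm]; exact div_mul_cancel₀ A hs.ne'
            have h3 : -c₁ * Real.sqrt ε * X τ = -(c₁ * A) := by
              rw [heq]; linear_combination (-c₁) * hcancel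
            linarith [hcB, hc₁A, mul_pos h₁ hC₀]
          filter_upwards [eventually_lt_of_hasDerivAt_neg (hXd τ hτ0) hd] with t ht
          rw [heq] at ht; exact ht.le
        · have hmem : X ⁻¹' (Iio (A / Real.sqrt ε)) ∈ 𝓝 τ := hXc (Iio_mem_nhds hlt)
          filter_upwards [eventually_nhdsWithin_of_eventually_nhds hmem] with t ht
          exact (Set.mem_Iio.mp ht).le
      -- right of τ, the Y bound keeps holding
      have hYev : ∀ᶠ t in 𝓝[>] τ, Y t ≤ B * ε := by
        rcases eq_or_lt_of_le hYτ with heq | hlt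
        · have hd : Y' τ < 0 := by
            have h1 := hYineq τ hτ0
            have h2 : c₄ * ε * Real.sqrt ε * X τ ≤ c₄ * A * ε := by
              calc c₄ * ε * Real.sqrt ε * X τ
                  ≤ c₄ * ε * Real.sqrt ε * (A / Real.sqrt ε) :=
                    mul_le_mul_of_nonneg_left hXτ (by positivity)
                _ = c₄ * A * ε := by
                    have hcancel : Real.sqrt ε * (A / Real.sqrt ε) = A := by
                      rw [mul_comm]; exact div_mul_cancel₀ A hs.ne'
                    linear_combination c₄ * ε * hcancel
            rw [heq] at h1
            have h5 : c₅ * (B * ε) = (c₄ * A + c₆ + 1 + c₅ * C₀) * ε := by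
              rw [← hc₅B]; ring
            nlinarith [mul_pos hε (show (0:ℝ) < 1 + c₅ * C₀ by positivity),
              mul_nonneg (mul_pos h₆ hε).le (sub_nonneg.mpr hε1.le)]
          filter_upwards [eventually_lt_of_hasDerivAt_neg (hYd τ hτ0) hd] with t ht
          rw [heq] at ht; exact ht.le
        · have hmem : Y ⁻¹' (Iio (B * ε)) ∈ 𝓝 τ := hYc (Iio_mem_nhds hlt)
          filter_upwards [eventually_nhdsWithin_of_eventually_nhds hmem] with t ht
          exact (Set.mem_Iio.mp ht).le
      -- extract an interval (τ, u) on which both bounds hold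
      obtain ⟨u, hu, husub⟩ := mem_nhdsGT_iff_exists_Ioo_subset.mp
        ((hXev.and hYev) : {t | X t ≤ A / Real.sqrt ε ∧ Y t ≤ B * ε} ∈ 𝓝[>] τ)
      obtain ⟨s, hsS, hsu⟩ := exists_lt_of_csInf_lt hne' (show sInf S < u from hu)
      have hτs : τ ≤ s := csInf_le hbdd hsS
      rcases eq_or_lt_of_le hτs with h | h
      · exact hsS.2 (h ▸ ⟨hXτ, hYτ⟩)
      · exact hsS.2 (husub ⟨h, hsu⟩)
    intro t ht
    by_contra hcon
    have : t ∈ S := ⟨ht, hcon⟩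
    rw [hgood] at this
    exact this
  exact main
end
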